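/- Let c be a real constant with c² > 1 and let f be twice differentiable on an open interval satisfying f''(u) - (2/(c²-1)) f'(u)² - 2 = 0. Then f(u) = -((c²-1)/2) ln |cos((2/√(c²-1)) u - a)| + b for some constants a, b. -/

import Mathlib

open Real Set

private lemma const_on_Ioo {F : ℝ → ℝ} {α β : ℝ}
    (h : ∀ u ∈ Set.Ioo α β, HasDerivAt F 0 u) {x y : ℝ}
    (hx : x ∈ Set.Ioo α β) (hy : y ∈ Set.Ioo α β) : F x = F y := by
  apply (convex_Ioo α β).is_const_of_fderivWithin_eq_zero
    (fun u hu => ((h u hu).differentiableAt).differentiableWithinAt)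
    (fun u hu => ?_) hx hy
  have h2 := ((h u hu).hasFDerivAt).hasFDerivWithinAt.fderivWithin
    (isOpen_Ioo.uniqueDiffOn u hu)
  rw [h2]
  ext
  simp

theorem stmt_10 (c α β : ℝ) (hc : 1 < c ^ 2) (f : ℝ → ℝ)
    (hd1 : ∀ u ∈ Set.Ioo α β, DifferentiableAt ℝ f u)
    (hd2 : ∀ u ∈ Set.Ioo α β, DifferentiableAt ℝ (deriv f) u)
    (hode : ∀ u ∈ Set.Ioo α β,
      deriv (deriv f) u - (2 / (c ^ 2 - 1)) * (deriv f u) ^ 2 - 2 = 0) :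
    ∃ a b : ℝ, ∀ u ∈ Set.Ioo α β,
      f u = -((c ^ 2 - 1) / 2) *
          Real.log |Real.cos ((2 / Real.sqrt (c ^ 2 - 1)) * u - a)| + b := by
  rcases Set.eq_empty_or_nonempty (Set.Ioo α β) with he | ⟨u₀, hu₀⟩
  · exact ⟨0, 0, fun u hu => absurd hu (by simp [he])⟩
  have hk : 0 < c ^ 2 - 1 := by linarith
  set s := Real.sqrt (c ^ 2 - 1) with hsdef
  have hs : 0 < s := Real.sqrt_pos.mpr hk
  have hs2 : s ^ 2 = c ^ 2 - 1 := Real.sq_sqrt hk.le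
  set g := deriv f with hg
  have hgd : ∀ u ∈ Set.Ioo α β,
      HasDerivAt g ((2 / s ^ 2) * ((g u) ^ 2 + s ^ 2)) u := by
    intro u hu
    have h1 := (hd2 u hu).hasDerivAt
    have h2 := hode u hu
    have h3 : deriv g u = (2 / s ^ 2) * ((g u) ^ 2 + s ^ 2) := by
      rw [hs2]
      have : deriv g u = (2 / (c ^ 2 - 1)) * (g u) ^ 2 + 2 := by
        rw [hg]; linarith
      rw [this]
      field_simp
    rwa [h3] at h1
  have harc : ∀ u ∈ Set.Ioo α β,
      HasDerivAt (fun u => Real.arctan (g u / s) - (2 / s) * u) 0 u := by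
    intro u hu
    have h1 : HasDerivAt (fun u => g u / s)
        ((2 / s ^ 2) * ((g u) ^ 2 + s ^ 2) / s) u := (hgd u hu).div_const s
    have h2 := h1.arctan
    have h3 : 1 / (1 + (g u / s) ^ 2) * ((2 / s ^ 2) * ((g u) ^ 2 + s ^ 2) / s)
        = 2 / s := by
      have hsn : s ≠ 0 := hs.ne'
      have hpos : (0:ℝ) < s ^ 2 + (g u) ^ 2 := by positivity
      field_simp
      ring
    rw [h3] at h2
    have h4 : HasDerivAt (fun u : ℝ => (2 / s) * u) (2 / s) u := by
      simpa using (hasDerivAt_id u).const_mul (2 / s)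
    have h5 := h2.sub h4
    rwa [sub_self] at h5
  set a : ℝ := (2 / s) * u₀ - Real.arctan (g u₀ / s) with ha
  have key : ∀ u ∈ Set.Ioo α β, Real.arctan (g u / s) = (2 / s) * u - a := by
    intro u hu
    have := const_on_Ioo harc hu hu₀
    simp only [ha]
    linarith
  have hcos : ∀ u ∈ Set.Ioo α β, 0 < Real.cos ((2 / s) * u - a) := by
    intro u hu
    rw [← key u hu]
    exact Real.cos_arctan_pos _
  have hsin : ∀ u ∈ Set.Ioo α β,
      Real.sin ((2 / s) * u - a) = Real.cos ((2 / s) * u - a) * (g u / s) := by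
    intro u hu
    have ht : Real.tan ((2 / s) * u - a) = g u / s := by
      rw [← key u hu, Real.tan_arctan]
    rw [Real.tan_eq_sin_div_cos, div_eq_iff (hcos u hu).ne'] at ht
    rw [ht]; ring
  have hF : ∀ u ∈ Set.Ioo α β,
      HasDerivAt (fun u => f u + ((c ^ 2 - 1) / 2) *
        Real.log (Real.cos ((2 / s) * u - a))) 0 u := by
    intro u hu
    have hf' : HasDerivAt f (g u) u := (hd1 u hu).hasDerivAt
    have hθ : HasDerivAt (fun u : ℝ => (2 / s) * u - a) (2 / s) u := by
      simpa using ((hasDerivAt_id u).const_mul (2 / s)).sub_const a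
    have hcosd := hθ.cos
    have hlog := hcosd.log (hcos u hu).ne'
    have hmul := hlog.const_mul ((c ^ 2 - 1) / 2)
    have htotal := hf'.add hmul
    have heq : g u + (c ^ 2 - 1) / 2 *
        (-Real.sin ((2 / s) * u - a) * (2 / s) / Real.cos ((2 / s) * u - a))
        = 0 := by
      have hcn := (hcos u hu).ne'
      have hsn : s ≠ 0 := hs.ne'
      rw [hsin u hu]
      set C := Real.cos (2 / s * u - a) with hC
      have h5 : -(C * (g u / s)) * (2 / s) / C = -(2 * g u / s ^ 2) := by
        field_simp
      rw [h5, ← hs2]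
      field_simp
      ring
    rwa [heq] at htotal
  refine ⟨a, f u₀ + ((c ^ 2 - 1) / 2) *
    Real.log (Real.cos ((2 / s) * u₀ - a)), fun u hu => ?_⟩
  have := const_on_Ioo hF hu hu₀
  rw [abs_of_pos (hcos u hu)]
  linarith
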